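/- Let ν>0, σ²>0, r∈(0,1) and μ₁,μ₂∈ℝ. For all y₁,y₂∈ℝ, ∫₀^∞ ∫₀^∞ f(y₁|z₁,μ₁) · f(y₂|z₂,μ₂) · g_{ν/2,r}(z₁,z₂) dz₁ dz₂ = ((1−r)^{ν/2+1}/(πνσ²)) · (Γ((ν+1)/2)/Γ(ν/2))² · ω(y₁,y₂)^{(ν+1)/2} · ₂F₁((ν+1)/2, (ν+1)/2; ν/2; r·ω(y₁,y₂)). That is, the pairwise joint density of (Y_{t+j},Y_t) in the NSVt model with r = ρ^j is given by this explicit hypergeometric expression. -/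

import Mathlib

open MeasureTheory Real Set

/-- Modified Bessel function of the first kind (series form). -/
noncomputable def besselI (α x : ℝ) : ℝ :=
  ∑' k : ℕ, (x / 2) ^ (2 * (k : ℝ) + α) / (Real.Gamma ((k : ℝ) + α + 1) * (Nat.factorial k : ℝ))

/-- Gamma density with rate `γ` and shape `α`. -/
noncomputable def gammaPdf (γ α z : ℝ) : ℝ :=
  γ ^ α * z ^ (α - 1) * Real.exp (-γ * z) / Real.Gamma α

/-- Kibble bivariate gamma density with parameters `φ > 0` and `r ∈ (0,1)`. -/
noncomputable def kibble (φ r z₁ z₂ : ℝ) : ℝ :=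
  φ ^ (φ + 1) / ((1 - r) * Real.Gamma φ) * (z₁ * z₂ / r) ^ ((φ - 1) / 2) *
    Real.exp (-φ * (z₁ + z₂) / (1 - r)) *
    besselI (φ - 1) (2 * φ * Real.sqrt (r * z₁ * z₂) / (1 - r))

/-- Conditional normal density of the NSVt model given latent `z`: `N(μ, σ²/z)`. -/
noncomputable def normCond (σ μ y z : ℝ) : ℝ :=
  Real.sqrt z / (Real.sqrt (2 * Real.pi) * σ) * Real.exp (-z * (y - μ) ^ 2 / (2 * σ ^ 2))

/-- Student-t density with `ν` degrees of freedom, location `μ` and scale `σ`. -/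
noncomputable def studentTPdf (ν μ σ y : ℝ) : ℝ :=
  Real.Gamma ((ν + 1) / 2) / (Real.Gamma (ν / 2) * Real.sqrt (Real.pi * ν) * σ) *
    (1 + (y - μ) ^ 2 / (ν * σ ^ 2)) ^ (-(ν + 1) / 2)

/-- Gauss hypergeometric series `₂F₁(a₁,a₂;b;x)`. -/
noncomputable def hyp2F1 (a₁ a₂ b x : ℝ) : ℝ :=
  ∑' k : ℕ, Real.Gamma ((k : ℝ) + a₁) * Real.Gamma ((k : ℝ) + a₂) * Real.Gamma b /
    (Real.Gamma a₁ * Real.Gamma a₂ * Real.Gamma ((k : ℝ) + b)) * x ^ k / (Nat.factorial k : ℝ)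

/-- Confluent hypergeometric (Kummer) series `₁F₁(a;b;x)`. -/
noncomputable def hyp1F1 (a b x : ℝ) : ℝ :=
  ∑' k : ℕ, Real.Gamma ((k : ℝ) + a) * Real.Gamma b /
    (Real.Gamma a * Real.Gamma ((k : ℝ) + b)) * x ^ k / (Nat.factorial k : ℝ)

/-- Generalized Laguerre polynomial of degree `n` with parameter `α`. -/
noncomputable def laguerreL (n : ℕ) (α x : ℝ) : ℝ :=
  ∑ i ∈ Finset.range (n + 1),
    (-1 : ℝ) ^ i * Real.Gamma ((n : ℝ) + α + 1) /
      (Real.Gamma (α + (i : ℝ) + 1) * (Nat.factorial (n - i) : ℝ) * (Nat.factorial i : ℝ)) * x ^ i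

/-- Negative binomial pmf with parameters `φ > 0` and `r ∈ (0,1)`. -/
noncomputable def nbinomPmf (φ r : ℝ) (u : ℕ) : ℝ :=
  Real.Gamma (φ + u) / (Real.Gamma φ * (Nat.factorial u : ℝ)) * (1 - r) ^ φ * r ^ u

/-- The quantity `ω(y₁,y₂)` appearing in the pairwise joint density of the NSVt model. -/
noncomputable def omegaFn (ν σ r μ₁ μ₂ y₁ y₂ : ℝ) : ℝ :=
  ((1 + (1 - r) * (y₁ - μ₁) ^ 2 / (ν * σ ^ 2)) *
    (1 + (1 - r) * (y₂ - μ₂) ^ 2 / (ν * σ ^ 2)))⁻¹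

/-- Pairwise joint density of the NSVt model (with `r = ρʲ`). -/
noncomputable def pairDensity (ν σ r μ₁ μ₂ y₁ y₂ : ℝ) : ℝ :=
  (1 - r) ^ (ν / 2 + 1) / (Real.pi * ν * σ ^ 2) *
    (Real.Gamma ((ν + 1) / 2) / Real.Gamma (ν / 2)) ^ 2 *
    omegaFn ν σ r μ₁ μ₂ y₁ y₂ ^ ((ν + 1) / 2) *
    hyp2F1 ((ν + 1) / 2) ((ν + 1) / 2) (ν / 2) (r * omegaFn ν σ r μ₁ μ₂ y₁ y₂)

open Filter

lemma NSV.integrableOn_aux {t c : ℝ} (ht : 0 < t) (hc : 0 < c) :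
    IntegrableOn (fun z : ℝ => z ^ (t - 1) * Real.exp (-(c * z))) (Ioi 0) := by
  have h := integrableOn_rpow_mul_exp_neg_mul_rpow
    (show (-1:ℝ) < t - 1 by linarith) one_pos hc
  refine h.congr_fun (fun z hz => ?_) measurableSet_Ioi
  beta_reduce
  rw [Real.rpow_one, neg_mul]

lemma NSV.integral_aux {t c : ℝ} (ht : 0 < t) (hc : 0 < c) :
    ∫ z in Ioi (0:ℝ), z ^ (t - 1) * Real.exp (-(c * z)) = Real.Gamma t / c ^ t := by
  rw [Real.integral_rpow_mul_exp_neg_mul_Ioi ht hc, one_div,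
    Real.inv_rpow hc.le, inv_mul_eq_div]

lemma NSV.tendsto_aux (s φ : ℝ) (hφ : 0 < φ) :
    Tendsto (fun k : ℕ => ((k:ℝ) + s) / ((k:ℝ) + φ)) atTop (nhds 1) := by
  have h0 : Tendsto (fun k : ℕ => ((k:ℝ) + φ)⁻¹) atTop (nhds 0) :=
    tendsto_inv_atTop_zero.comp
      (tendsto_atTop_add_const_right _ φ tendsto_natCast_atTop_atTop)
  have h1 : Tendsto (fun k : ℕ => 1 + (s - φ) * ((k:ℝ) + φ)⁻¹) atTop (nhds (1 + (s - φ) * 0)) :=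
    tendsto_const_nhds.add (h0.const_mul _)
  rw [mul_zero, add_zero] at h1
  refine h1.congr fun k => ?_
  have hk : ((k:ℝ) + φ) ≠ 0 := by positivity
  field_simp
  ring

lemma NSV.summable_two (s φ x : ℝ) (hs : 0 < s) (hφ : 0 < φ) (hx0 : 0 < x) (hx1 : x < 1) :
    Summable (fun k : ℕ =>
      Real.Gamma ((k:ℝ) + s) ^ 2 / (Real.Gamma ((k:ℝ) + φ) * (Nat.factorial k : ℝ)) * x ^ k) := by
  set f : ℕ → ℝ := fun k =>
      Real.Gamma ((k:ℝ) + s) ^ 2 / (Real.Gamma ((k:ℝ) + φ) * (Nat.factorial k : ℝ)) * x ^ k with hf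
  have hfpos : ∀ k, 0 < f k := by
    intro k
    have h1 : 0 < Real.Gamma ((k:ℝ) + s) := Real.Gamma_pos_of_pos (by positivity)
    have h2 : 0 < Real.Gamma ((k:ℝ) + φ) := Real.Gamma_pos_of_pos (by positivity)
    have h3 : (0:ℝ) < Nat.factorial k := by positivity
    positivity
  apply summable_of_ratio_test_tendsto_lt_one hx1
    (Filter.Eventually.of_forall fun k => (hfpos k).ne')
  have key : ∀ k : ℕ, ‖f (k+1)‖ / ‖f k‖ =
      (((k:ℝ) + s) / ((k:ℝ) + φ)) * (((k:ℝ) + s) / ((k:ℝ) + 1)) * x := by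
    intro k
    have h1 : 0 < Real.Gamma ((k:ℝ) + s) := Real.Gamma_pos_of_pos (by positivity)
    have h2 : 0 < Real.Gamma ((k:ℝ) + φ) := Real.Gamma_pos_of_pos (by positivity)
    have h3 : (0:ℝ) < (Nat.factorial k : ℝ) := by positivity
    have h4 : ((k:ℝ) + 1) ≠ 0 := by positivity
    have h5 : (x:ℝ) ^ k ≠ 0 := by positivity
    rw [Real.norm_eq_abs, Real.norm_eq_abs, abs_of_pos (hfpos _), abs_of_pos (hfpos k), hf]
    simp only [Nat.factorial_succ]
    push_cast
    rw [show ((k:ℝ)+1+s) = ((k:ℝ)+s)+1 by ring,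
      Real.Gamma_add_one (show ((k:ℝ)+s) ≠ 0 by positivity),
      show ((k:ℝ)+1+φ) = ((k:ℝ)+φ)+1 by ring,
      Real.Gamma_add_one (show ((k:ℝ)+φ) ≠ 0 by positivity)]
    field_simp
    ring
  have ht : Tendsto (fun k : ℕ =>
      (((k:ℝ) + s) / ((k:ℝ) + φ)) * (((k:ℝ) + s) / ((k:ℝ) + 1)) * x) atTop (nhds x) := by
    have := ((NSV.tendsto_aux s φ hφ).mul (NSV.tendsto_aux s 1 one_pos)).mul_const x
    rw [one_mul, one_mul] at this
    exact this
  exact ht.congr fun k => (key k).symm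

lemma NSV.summable_one (s φ x : ℝ) (hs : 0 < s) (hφ : 0 < φ) (hx0 : 0 < x) :
    Summable (fun k : ℕ =>
      Real.Gamma ((k:ℝ) + s) / (Real.Gamma ((k:ℝ) + φ) * (Nat.factorial k : ℝ)) * x ^ k) := by
  set f : ℕ → ℝ := fun k =>
      Real.Gamma ((k:ℝ) + s) / (Real.Gamma ((k:ℝ) + φ) * (Nat.factorial k : ℝ)) * x ^ k with hf
  have hfpos : ∀ k, 0 < f k := by
    intro k
    have h1 : 0 < Real.Gamma ((k:ℝ) + s) := Real.Gamma_pos_of_pos (by positivity)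
    have h2 : 0 < Real.Gamma ((k:ℝ) + φ) := Real.Gamma_pos_of_pos (by positivity)
    have h3 : (0:ℝ) < Nat.factorial k := by positivity
    positivity
  apply summable_of_ratio_test_tendsto_lt_one one_pos
    (Filter.Eventually.of_forall fun k => (hfpos k).ne')
  have key : ∀ k : ℕ, ‖f (k+1)‖ / ‖f k‖ =
      (((k:ℝ) + s) / ((k:ℝ) + φ)) * (1 / ((k:ℝ) + 1)) * x := by
    intro k
    have h1 : 0 < Real.Gamma ((k:ℝ) + s) := Real.Gamma_pos_of_pos (by positivity)
    have h2 : 0 < Real.Gamma ((k:ℝ) + φ) := Real.Gamma_pos_of_pos (by positivity)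
    have h3 : (0:ℝ) < (Nat.factorial k : ℝ) := by positivity
    have h4 : ((k:ℝ) + 1) ≠ 0 := by positivity
    have h5 : (x:ℝ) ^ k ≠ 0 := by positivity
    rw [Real.norm_eq_abs, Real.norm_eq_abs, abs_of_pos (hfpos _), abs_of_pos (hfpos k), hf]
    simp only [Nat.factorial_succ]
    push_cast
    rw [show ((k:ℝ)+1+s) = ((k:ℝ)+s)+1 by ring,
      Real.Gamma_add_one (show ((k:ℝ)+s) ≠ 0 by positivity),
      show ((k:ℝ)+1+φ) = ((k:ℝ)+φ)+1 by ring,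
      Real.Gamma_add_one (show ((k:ℝ)+φ) ≠ 0 by positivity)]
    field_simp
    ring
  have ht : Tendsto (fun k : ℕ =>
      (((k:ℝ) + s) / ((k:ℝ) + φ)) * (1 / ((k:ℝ) + 1)) * x) atTop (nhds 0) := by
    have := ((NSV.tendsto_aux s φ hφ).mul tendsto_one_div_add_atTop_nhds_zero_nat).mul_const x
    rw [mul_zero, zero_mul] at this
    exact this
  exact ht.congr fun k => (key k).symm

lemma NSV.perk (φ σ r z₁ z₂ A B : ℝ) (k : ℕ) (hφ : 0 < φ) (hσ : 0 < σ)
    (hr0 : 0 < r) (hr1 : r < 1) (hz₁ : 0 < z₁) (hz₂ : 0 < z₂) :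
    (Real.sqrt z₁ / (Real.sqrt (2*Real.pi) * σ) * Real.exp (-z₁ * A / (2*σ^2))) *
      (Real.sqrt z₂ / (Real.sqrt (2*Real.pi) * σ) * Real.exp (-z₂ * B / (2*σ^2))) *
      (φ ^ (φ+1) / ((1-r) * Real.Gamma φ) * ((z₁*z₂/r) ^ ((φ-1)/2)) *
        Real.exp (-φ*(z₁+z₂)/(1-r)) *
        ((2*φ*Real.sqrt (r*z₁*z₂)/(1-r)/2) ^ (2*(k:ℝ)+(φ-1)) /
          (Real.Gamma ((k:ℝ)+(φ-1)+1) * (Nat.factorial k : ℝ))))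
    = ((2*Real.pi*σ^2)⁻¹ * φ ^ (2*φ) / ((1-r) ^ φ * Real.Gamma φ)) * ((((φ/(1-r))^2*r) ^ k /
        (Real.Gamma ((k:ℝ)+φ) * (Nat.factorial k : ℝ))) *
        ((z₁ ^ ((k:ℝ)+(φ+1/2)-1) * Real.exp (-((A/(2*σ^2)+φ/(1-r))*z₁))) *
        (z₂ ^ ((k:ℝ)+(φ+1/2)-1) * Real.exp (-((B/(2*σ^2)+φ/(1-r))*z₂))))) := by
  have h1r : 0 < 1 - r := by linarith
  have hπ : (0:ℝ) < 2*Real.pi := by positivity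
  have hΓφ : 0 < Real.Gamma φ := Real.Gamma_pos_of_pos hφ
  have hΓkφ : 0 < Real.Gamma ((k:ℝ)+φ) := Real.Gamma_pos_of_pos (by positivity)
  have hfac : (0:ℝ) < (Nat.factorial k : ℝ) := by positivity
  have hsz1 : 0 < Real.sqrt z₁ := Real.sqrt_pos.mpr hz₁
  have hsz2 : 0 < Real.sqrt z₂ := Real.sqrt_pos.mpr hz₂
  have hs2π : 0 < Real.sqrt (2*Real.pi) := Real.sqrt_pos.mpr hπ
  have hrz : 0 < r*z₁*z₂ := by positivity
  have hsrz : 0 < Real.sqrt (r*z₁*z₂) := Real.sqrt_pos.mpr hrz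
  have hbase : 0 < 2*φ*Real.sqrt (r*z₁*z₂)/(1-r)/2 := by positivity
  have hzzr : 0 < z₁*z₂/r := by positivity
  rw [show (k:ℝ)+(φ-1)+1 = (k:ℝ)+φ by ring]
  refine Real.log_injOn_pos (Set.mem_Ioi.2 ?_) (Set.mem_Ioi.2 ?_) ?_
  · positivity
  · positivity
  · rw [show (2*φ*Real.sqrt (r*z₁*z₂)/(1-r)/2) = φ/(1-r)*Real.sqrt (r*z₁*z₂) by ring]
    simp (disch := positivity) only [Real.log_mul, Real.log_div, Real.log_inv,
      Real.log_exp, Real.log_pow, Real.log_rpow, Real.log_sqrt]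
    ring

lemma NSV.perk2 (ν σ r a b ω : ℝ) (k : ℕ) (hν : 0 < ν) (hσ : 0 < σ)
    (hr0 : 0 < r) (hr1 : r < 1) (ha : 0 < a) (hb : 0 < b)
    (hω : ω = (ν/2/(1-r))^2 / (a*b)) :
    ((2*Real.pi*σ^2)⁻¹ * (ν/2) ^ (2*(ν/2)) / ((1-r) ^ (ν/2) * Real.Gamma (ν/2))) *
      ((((ν/2/(1-r))^2*r) ^ k / (Real.Gamma ((k:ℝ)+(ν/2)) * (Nat.factorial k : ℝ))) *
        ((Real.Gamma ((k:ℝ)+(ν/2+1/2)) / a ^ ((k:ℝ)+(ν/2+1/2))) *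
         (Real.Gamma ((k:ℝ)+(ν/2+1/2)) / b ^ ((k:ℝ)+(ν/2+1/2)))))
    = (1 - r) ^ (ν / 2 + 1) / (Real.pi * ν * σ ^ 2) *
        (Real.Gamma ((ν + 1) / 2) / Real.Gamma (ν / 2)) ^ 2 *
        ω ^ ((ν + 1) / 2) *
        (Real.Gamma ((k:ℝ) + (ν + 1) / 2) * Real.Gamma ((k:ℝ) + (ν + 1) / 2) *
            Real.Gamma (ν / 2) /
            (Real.Gamma ((ν + 1) / 2) * Real.Gamma ((ν + 1) / 2) *
              Real.Gamma ((k:ℝ) + ν / 2)) * (r * ω) ^ k / (Nat.factorial k : ℝ)) := by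
  have h1r : 0 < 1 - r := by linarith
  have hω' : 0 < ω := by rw [hω]; positivity
  have e1 : (k:ℝ) + (ν+1)/2 = (k:ℝ) + (ν/2+1/2) := by ring
  have e2 : (ν+1)/2 = ν/2+1/2 := by ring
  rw [e1, e2, hω]
  refine Real.log_injOn_pos (Set.mem_Ioi.2 ?_) (Set.mem_Ioi.2 ?_) ?_
  · have := Real.Gamma_pos_of_pos (show (0:ℝ) < (k:ℝ)+(ν/2) by positivity)
    positivity
  · positivity
  · simp (disch := positivity) only [Real.log_mul, Real.log_div, Real.log_inv,
      Real.log_exp, Real.log_pow, Real.log_rpow, Real.log_sqrt]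
    ring

set_option maxHeartbeats 2000000 in
/-- explicit hypergeometric form of the pairwise joint density of the NSVt
model. -/
theorem pairwise_joint_density (ν σ r μ₁ μ₂ : ℝ) (hν : 0 < ν) (hσ : 0 < σ)
    (hr : r ∈ Set.Ioo (0 : ℝ) 1) (y₁ y₂ : ℝ) :
    (∫ z₂ in Set.Ioi (0 : ℝ), ∫ z₁ in Set.Ioi (0 : ℝ),
        normCond σ μ₁ y₁ z₁ * normCond σ μ₂ y₂ z₂ * kibble (ν / 2) r z₁ z₂)
      = pairDensity ν σ r μ₁ μ₂ y₁ y₂ := by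
  obtain ⟨hr0, hr1⟩ := hr
  have h1r : 0 < 1 - r := by linarith
  have hφ : 0 < ν/2 := by linarith
  have hs : 0 < ν/2 + 1/2 := by linarith
  have hΓφ : 0 < Real.Gamma (ν/2) := Real.Gamma_pos_of_pos hφ
  set a := (y₁ - μ₁)^2 / (2*σ^2) + ν/2/(1-r) with hadef
  set b := (y₂ - μ₂)^2 / (2*σ^2) + ν/2/(1-r) with hbdef
  have hm : 0 < ν/2/(1-r) := by positivity
  have ha : 0 < a := by rw [hadef]; positivity
  have hb : 0 < b := by rw [hbdef]; positivity
  have ham : ν/2/(1-r) ≤ a := by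
    have h0 : 0 ≤ (y₁ - μ₁)^2 / (2*σ^2) := by positivity
    rw [hadef]; linarith
  have hbm : ν/2/(1-r) ≤ b := by
    have h0 : 0 ≤ (y₂ - μ₂)^2 / (2*σ^2) := by positivity
    rw [hbdef]; linarith
  set ω := omegaFn ν σ r μ₁ μ₂ y₁ y₂ with hωdef
  have hωeq : ω = (ν/2/(1-r))^2 / (a*b) := by
    rw [hωdef, omegaFn, hadef, hbdef]
    have h1 : (0:ℝ) < 1 + (1 - r) * (y₁ - μ₁) ^ 2 / (ν * σ ^ 2) := by positivity
    have h2 : (0:ℝ) < 1 + (1 - r) * (y₂ - μ₂) ^ 2 / (ν * σ ^ 2) := by positivity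
    rw [eq_div_iff (by positivity), inv_mul_eq_div, div_eq_iff (by positivity)]
    field_simp
    ring
  have hx0 : 0 < ((ν/2/(1-r))^2*r) / (a*b) := by positivity
  have hx1 : ((ν/2/(1-r))^2*r) / (a*b) < 1 := by
    have h1 : (ν/2/(1-r)) * (ν/2/(1-r)) ≤ a * b := mul_le_mul ham hbm hm.le ha.le
    have h2 : ((ν/2/(1-r))^2*r) / (a*b) ≤ r := by
      rw [div_le_iff₀ (by positivity)]
      nlinarith [h1, hm, hr0]
    linarith
  set c0 := (2*Real.pi*σ^2)⁻¹ * (ν/2) ^ (2*(ν/2)) / ((1-r) ^ (ν/2) * Real.Gamma (ν/2)) with hc0def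
  set q := ((ν/2/(1-r))^2*r) with hqdef
  have hc0 : 0 < c0 := by rw [hc0def]; positivity
  have hq : 0 < q := by rw [hqdef]; positivity
  set c : ℕ → ℝ := fun k => c0 * (q ^ k / (Real.Gamma ((k:ℝ)+(ν/2)) * (Nat.factorial k : ℝ))) with hcdef
  set g : ℕ → ℝ → ℝ := fun k z => z ^ ((k:ℝ)+(ν/2+1/2)-1) * Real.exp (-(a*z)) with hgdef
  set h : ℕ → ℝ → ℝ := fun k z => z ^ ((k:ℝ)+(ν/2+1/2)-1) * Real.exp (-(b*z)) with hhdef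
  clear_value a b ω c0 q c g h
  have hcpos : ∀ k, 0 < c k := by
    intro k
    have := Real.Gamma_pos_of_pos (show (0:ℝ) < (k:ℝ)+(ν/2) by positivity)
    have : (0:ℝ) < (Nat.factorial k : ℝ) := by positivity
    rw [hcdef]
    positivity
  have hgpos : ∀ k, ∀ z ∈ Ioi (0:ℝ), 0 < g k z := by
    intro k z hz
    have hz' : (0:ℝ) < z := hz
    rw [hgdef]
    positivity
  have hhpos : ∀ k, ∀ z ∈ Ioi (0:ℝ), 0 < h k z := by
    intro k z hz
    have hz' : (0:ℝ) < z := hz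
    rw [hhdef]
    positivity
  have hgInt : ∀ k, IntegrableOn (g k) (Ioi 0) := by
    intro k; simp only [hgdef]
    exact NSV.integrableOn_aux (t := (k:ℝ)+(ν/2+1/2)) (by positivity) ha
  have hhInt : ∀ k, IntegrableOn (h k) (Ioi 0) := by
    intro k; simp only [hhdef]
    exact NSV.integrableOn_aux (t := (k:ℝ)+(ν/2+1/2)) (by positivity) hb
  have hgVal : ∀ k, ∫ z in Ioi (0:ℝ), g k z
      = Real.Gamma ((k:ℝ)+(ν/2+1/2)) / a ^ ((k:ℝ)+(ν/2+1/2)) := by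
    intro k; simp only [hgdef]
    exact NSV.integral_aux (by positivity) ha
  have hhVal : ∀ k, ∫ z in Ioi (0:ℝ), h k z
      = Real.Gamma ((k:ℝ)+(ν/2+1/2)) / b ^ ((k:ℝ)+(ν/2+1/2)) := by
    intro k; simp only [hhdef]
    exact NSV.integral_aux (by positivity) hb
  have expand : ∀ z₁ ∈ Ioi (0:ℝ), ∀ z₂ ∈ Ioi (0:ℝ),
      normCond σ μ₁ y₁ z₁ * normCond σ μ₂ y₂ z₂ * kibble (ν/2) r z₁ z₂
        = ∑' k, c k * (g k z₁ * h k z₂) := by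
    intro z₁ hz₁ z₂ hz₂
    have hz₁' : (0:ℝ) < z₁ := hz₁
    have hz₂' : (0:ℝ) < z₂ := hz₂
    unfold normCond kibble besselI
    rw [← tsum_mul_left, ← tsum_mul_left]
    refine tsum_congr fun k => ?_
    have hperk := NSV.perk (ν/2) σ r z₁ z₂ ((y₁-μ₁)^2) ((y₂-μ₂)^2) k hφ hσ hr0 hr1 hz₁' hz₂'
    simp only [hcdef, hgdef, hhdef]
    rw [hadef, hbdef, hc0def, hqdef]
    linear_combination hperk
  have hΓks : ∀ k : ℕ, (0:ℝ) < Real.Gamma ((k:ℝ)+(ν/2+1/2)) :=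
    fun k => Real.Gamma_pos_of_pos (by positivity)
  have hΓkφ : ∀ k : ℕ, (0:ℝ) < Real.Gamma ((k:ℝ)+(ν/2)) :=
    fun k => Real.Gamma_pos_of_pos (by positivity)
  have easplit : ∀ k : ℕ, a ^ ((k:ℝ)+(ν/2+1/2)) = a^(k:ℕ) * a^((ν/2+1/2):ℝ) := by
    intro k; rw [Real.rpow_add ha, Real.rpow_natCast]
  have ebsplit : ∀ k : ℕ, b ^ ((k:ℝ)+(ν/2+1/2)) = b^(k:ℕ) * b^((ν/2+1/2):ℝ) := by
    intro k; rw [Real.rpow_add hb, Real.rpow_natCast]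
  have step1 : ∀ z₂ ∈ Ioi (0:ℝ),
      (∫ z₁ in Ioi (0:ℝ), normCond σ μ₁ y₁ z₁ * normCond σ μ₂ y₂ z₂ * kibble (ν/2) r z₁ z₂)
        = ∑' k, c k * (Real.Gamma ((k:ℝ)+(ν/2+1/2)) / a ^ ((k:ℝ)+(ν/2+1/2))) * h k z₂ := by
    intro z₂ hz₂
    have hz₂' : (0:ℝ) < z₂ := hz₂
    have hint : ∀ k : ℕ, Integrable (fun z₁ => c k * (g k z₁ * h k z₂))
        (volume.restrict (Ioi 0)) :=
      fun k => ((hgInt k).mul_const (h k z₂)).const_mul (c k)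
    have hval : ∀ k : ℕ, (∫ z₁ in Ioi (0:ℝ), ‖c k * (g k z₁ * h k z₂)‖)
        = c k * (Real.Gamma ((k:ℝ)+(ν/2+1/2)) / a ^ ((k:ℝ)+(ν/2+1/2))) * h k z₂ := by
      intro k
      rw [setIntegral_congr_fun measurableSet_Ioi (fun z hz => Real.norm_of_nonneg
        (mul_nonneg (hcpos k).le (mul_nonneg (hgpos k z hz).le (hhpos k z₂ hz₂).le)))]
      rw [MeasureTheory.integral_const_mul, MeasureTheory.integral_mul_const, hgVal k]
      ring
    have hsum : Summable fun k : ℕ => ∫ z₁ in Ioi (0:ℝ), ‖c k * (g k z₁ * h k z₂)‖ := by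
      have base := NSV.summable_one (ν/2+1/2) (ν/2) (q*z₂/a) hs hφ (by positivity)
      refine Summable.congr (f := fun k : ℕ =>
        (c0 * z₂^((ν/2+1/2-1):ℝ) * Real.exp (-(b*z₂)) / a^((ν/2+1/2):ℝ)) *
          (Real.Gamma ((k:ℝ)+(ν/2+1/2)) / (Real.Gamma ((k:ℝ)+(ν/2)) * (Nat.factorial k : ℝ))
            * (q*z₂/a) ^ k)) ?_ fun k => ?_
      · exact base.mul_left _
      · rw [hval k]
        have e2 : z₂ ^ ((k:ℝ)+(ν/2+1/2)-1) = z₂^(k:ℕ) * z₂^((ν/2+1/2-1):ℝ) := by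
          rw [show (k:ℝ)+(ν/2+1/2)-1 = (k:ℝ)+(ν/2+1/2-1) by ring,
            Real.rpow_add hz₂', Real.rpow_natCast]
        simp only [hcdef, hhdef]
        rw [easplit k, e2, div_pow, mul_pow]
        have n1 : (Nat.factorial k : ℝ) ≠ 0 := by positivity
        have n2 : a ^ ((ν/2+1/2):ℝ) ≠ 0 := by positivity
        have n3 : (a:ℝ) ^ (k:ℕ) ≠ 0 := by positivity
        have n4 : Real.Gamma ((k:ℝ)+(ν/2)) ≠ 0 := (hΓkφ k).ne'
        field_simp
    rw [setIntegral_congr_fun measurableSet_Ioi (fun z₁ hz₁ => expand z₁ hz₁ z₂ hz₂),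
      ← MeasureTheory.integral_tsum_of_summable_integral_norm hint hsum]
    refine tsum_congr fun k => ?_
    rw [MeasureTheory.integral_const_mul, MeasureTheory.integral_mul_const, hgVal k]
    ring
  have hint2 : ∀ k : ℕ, Integrable (fun z₂ =>
      c k * (Real.Gamma ((k:ℝ)+(ν/2+1/2)) / a ^ ((k:ℝ)+(ν/2+1/2))) * h k z₂)
      (volume.restrict (Ioi 0)) :=
    fun k => (hhInt k).const_mul _
  have hval2 : ∀ k : ℕ, (∫ z₂ in Ioi (0:ℝ),
      ‖c k * (Real.Gamma ((k:ℝ)+(ν/2+1/2)) / a ^ ((k:ℝ)+(ν/2+1/2))) * h k z₂‖)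
      = c k * (Real.Gamma ((k:ℝ)+(ν/2+1/2)) / a ^ ((k:ℝ)+(ν/2+1/2))) *
        (Real.Gamma ((k:ℝ)+(ν/2+1/2)) / b ^ ((k:ℝ)+(ν/2+1/2))) := by
    intro k
    have hIa : (0:ℝ) < Real.Gamma ((k:ℝ)+(ν/2+1/2)) / a ^ ((k:ℝ)+(ν/2+1/2)) := by
      have := hΓks k; positivity
    rw [setIntegral_congr_fun measurableSet_Ioi (fun z hz => Real.norm_of_nonneg
      (mul_nonneg (mul_nonneg (hcpos k).le hIa.le) (hhpos k z hz).le))]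
    rw [MeasureTheory.integral_const_mul, hhVal k]
  have hsum2 : Summable fun k : ℕ => ∫ z₂ in Ioi (0:ℝ),
      ‖c k * (Real.Gamma ((k:ℝ)+(ν/2+1/2)) / a ^ ((k:ℝ)+(ν/2+1/2))) * h k z₂‖ := by
    have base := NSV.summable_two (ν/2+1/2) (ν/2) (q/(a*b)) hs hφ hx0 hx1
    refine Summable.congr (f := fun k : ℕ =>
      (c0 / (a^((ν/2+1/2):ℝ) * b^((ν/2+1/2):ℝ))) *
        (Real.Gamma ((k:ℝ)+(ν/2+1/2))^2 / (Real.Gamma ((k:ℝ)+(ν/2)) * (Nat.factorial k : ℝ))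
          * (q/(a*b)) ^ k)) (base.mul_left _) fun k => ?_
    rw [hval2 k]
    simp only [hcdef]
    rw [easplit k, ebsplit k, div_pow, mul_pow]
    have n1 : (Nat.factorial k : ℝ) ≠ 0 := by positivity
    have n2 : a ^ ((ν/2+1/2):ℝ) ≠ 0 := by positivity
    have n2b : b ^ ((ν/2+1/2):ℝ) ≠ 0 := by positivity
    have n3 : (a:ℝ) ^ (k:ℕ) ≠ 0 := by positivity
    have n3b : (b:ℝ) ^ (k:ℕ) ≠ 0 := by positivity
    have n4 : Real.Gamma ((k:ℝ)+(ν/2)) ≠ 0 := (hΓkφ k).ne'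
    field_simp
  rw [setIntegral_congr_fun measurableSet_Ioi (fun z₂ hz₂ => step1 z₂ hz₂),
    ← MeasureTheory.integral_tsum_of_summable_integral_norm hint2 hsum2]
  have hval3 : ∀ k : ℕ, (∫ z₂ in Ioi (0:ℝ),
      c k * (Real.Gamma ((k:ℝ)+(ν/2+1/2)) / a ^ ((k:ℝ)+(ν/2+1/2))) * h k z₂)
      = c k * (Real.Gamma ((k:ℝ)+(ν/2+1/2)) / a ^ ((k:ℝ)+(ν/2+1/2))) *
        (Real.Gamma ((k:ℝ)+(ν/2+1/2)) / b ^ ((k:ℝ)+(ν/2+1/2))) := by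
    intro k
    rw [MeasureTheory.integral_const_mul, hhVal k]
  rw [tsum_congr hval3]
  unfold pairDensity hyp2F1
  rw [← hωdef, ← tsum_mul_left]
  refine tsum_congr fun k => ?_
  simp only [hcdef]
  rw [hc0def, hqdef]
  linear_combination NSV.perk2 ν σ r a b ω k hν hσ hr0 hr1 ha hb hωeq
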